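/- arXiv:2501.01976 — 4 statements merged into one kernel-verified Lean document; each statement's English description precedes it below -/
import Mathlib

section
/- Let 0 < α < 1, γ > 0, and w(τ) = (α/γ)·(1+τ/γ)^{-(1+α)}. Then lim_{s→0⁺} (1 − ∫₀^∞ e^{−sτ} w(τ) dτ) / s^α = Γ(1−α) · γ^α; that is, the Laplace transform of w satisfies (ℒw)(s) = 1 − Γ(1−α)(γs)^α + o(s^α) as s → 0⁺. -/
open MeasureTheory Real Set Filter
open Topology

private lemma aux_integrable {γ s β : ℝ} (hγ : 0 < γ) (hs : 0 < s) (hβ : 0 ≤ β) :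
    IntegrableOn (fun τ : ℝ => Real.exp (-(s * τ)) * (1 + τ / γ) ^ (-β)) (Ioi 0) := by
  have hmeas : AEStronglyMeasurable (fun τ : ℝ => Real.exp (-(s * τ)) * (1 + τ / γ) ^ (-β))
      (volume.restrict (Ioi 0)) := by
    apply ContinuousOn.aestronglyMeasurable _ measurableSet_Ioi
    intro τ hτ
    have h1 : (0:ℝ) < 1 + τ / γ := by
      have : 0 < τ / γ := div_pos hτ hγ
      linarith
    exact ((Real.continuous_exp.comp (by fun_prop)).continuousAt.continuousWithinAt.mul
      (((continuous_const.add (continuous_id.div_const γ)).continuousAt.rpow_const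
        (Or.inl h1.ne')).continuousWithinAt))
  have hexp : IntegrableOn (fun τ : ℝ => Real.exp (-(s * τ))) (Ioi 0) := by
    simpa [neg_mul] using exp_neg_integrableOn_Ioi 0 hs
  refine hexp.mono' hmeas ?_
  filter_upwards [ae_restrict_mem measurableSet_Ioi] with τ hτ
  have h1 : (1:ℝ) ≤ 1 + τ / γ := by
    have : 0 < τ / γ := div_pos hτ hγ
    linarith
  have h2 : (1 + τ / γ) ^ (-β) ≤ 1 :=
    Real.rpow_le_one_of_one_le_of_nonpos h1 (neg_nonpos.mpr hβ)
  have h3 : 0 ≤ (1 + τ / γ) ^ (-β) := Real.rpow_nonneg (by linarith) _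
  rw [norm_mul, Real.norm_eq_abs, Real.norm_eq_abs, abs_of_pos (Real.exp_pos _),
    abs_of_nonneg h3]
  nlinarith [Real.exp_pos (-(s * τ))]

private lemma aux_parts {α γ s : ℝ} (hα0 : 0 < α) (hγ : 0 < γ) (hs : 0 < s) :
    (1 : ℝ) - (∫ τ in Ioi (0:ℝ), Real.exp (-s * τ) * ((α / γ) * (1 + τ / γ) ^ (-(1 + α))))
      = s * ∫ τ in Ioi (0:ℝ), Real.exp (-(s * τ)) * (1 + τ / γ) ^ (-α) := by
  set Φ : ℝ → ℝ := fun τ => -(Real.exp (-(s * τ)) * (1 + τ / γ) ^ (-α)) with hΦ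
  set f' : ℝ → ℝ := fun τ =>
    s * (Real.exp (-(s * τ)) * (1 + τ / γ) ^ (-α))
      + (α / γ) * (Real.exp (-(s * τ)) * (1 + τ / γ) ^ (-(1 + α))) with hf'
  have hderiv : ∀ τ : ℝ, -γ < τ → HasDerivAt Φ (f' τ) τ := by
    intro τ hτ
    have hbase : (0:ℝ) < 1 + τ / γ := by
      have : -1 < τ / γ := by
        rw [lt_div_iff₀ hγ]; linarith
      linarith
    have hE : HasDerivAt (fun τ : ℝ => Real.exp (-(s * τ))) (-s * Real.exp (-(s * τ))) τ := by
      have hinner : HasDerivAt (fun τ : ℝ => -(s * τ)) (-s) τ := by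
        exact (((hasDerivAt_id τ).const_mul s).neg).congr_deriv (by simp)
      have h := (Real.hasDerivAt_exp (-(s * τ))).comp τ hinner
      rw [show Real.exp (-(s * τ)) * -s = -s * Real.exp (-(s * τ)) by ring] at h
      exact h
    have hg : HasDerivAt (fun τ : ℝ => (1 + τ / γ) ^ (-α))
        ((-α) * (1 + τ / γ) ^ (-α - 1) * (1 / γ)) τ := by
      have hinner : HasDerivAt (fun τ : ℝ => 1 + τ / γ) (1 / γ) τ := by
        simpa using ((hasDerivAt_id τ).div_const γ).const_add 1
      exact (Real.hasDerivAt_rpow_const (Or.inl hbase.ne')).comp τ hinner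
    have := ((hE.mul hg).neg)
    refine this.congr_deriv ?_
    have he : (1 + τ / γ) ^ (-α - 1) = (1 + τ / γ) ^ (-(1 + α)) := by ring_nf
    rw [hf']
    simp only [he]
    ring
  have hint1 : IntegrableOn (fun τ : ℝ => Real.exp (-(s * τ)) * (1 + τ / γ) ^ (-α)) (Ioi 0) :=
    aux_integrable hγ hs hα0.le
  have hint2 : IntegrableOn
      (fun τ : ℝ => Real.exp (-(s * τ)) * (1 + τ / γ) ^ (-(1 + α))) (Ioi 0) :=
    aux_integrable hγ hs (by linarith)
  have hf'int : IntegrableOn f' (Ioi 0) := (hint1.const_mul s).add (hint2.const_mul (α / γ))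
  have htend : Tendsto Φ atTop (𝓝 0) := by
    have hexp : Tendsto (fun τ : ℝ => Real.exp (-(s * τ))) atTop (𝓝 0) := by
      apply Real.tendsto_exp_atBot.comp
      exact (tendsto_neg_atBot_iff.mpr (tendsto_atTop_atTop_of_monotone
        (fun a b hab => by nlinarith) (fun b => ⟨b / s, by rw [mul_div_cancel₀]; exact hs.ne'⟩)))
    apply squeeze_zero_norm' _ hexp
    filter_upwards [eventually_ge_atTop (0:ℝ)] with τ hτ
    have h1 : (1:ℝ) ≤ 1 + τ / γ := by
      have : 0 ≤ τ / γ := div_nonneg hτ hγ.le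
      linarith
    have h2 : (1 + τ / γ) ^ (-α) ≤ 1 :=
      Real.rpow_le_one_of_one_le_of_nonpos h1 (neg_nonpos.mpr hα0.le)
    have h3 : 0 ≤ (1 + τ / γ) ^ (-α) := Real.rpow_nonneg (by linarith) _
    rw [hΦ]
    simp only [norm_neg, norm_mul, Real.norm_eq_abs, abs_of_pos (Real.exp_pos _),
      abs_of_nonneg h3]
    nlinarith [Real.exp_pos (-(s * τ))]
  have hcont : ContinuousWithinAt Φ (Ici (0:ℝ)) 0 :=
    (hderiv 0 (by linarith)).continuousAt.continuousWithinAt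
  have key : ∫ τ in Ioi (0:ℝ), f' τ = 0 - Φ 0 :=
    integral_Ioi_of_hasDerivAt_of_tendsto hcont
      (fun τ hτ => hderiv τ (by simp at hτ; linarith)) hf'int htend
  have hΦ0 : Φ 0 = -1 := by simp [hΦ]
  rw [hΦ0] at key
  have hsplit : ∫ τ in Ioi (0:ℝ), f' τ
      = s * (∫ τ in Ioi (0:ℝ), Real.exp (-(s * τ)) * (1 + τ / γ) ^ (-α))
        + (α / γ) * ∫ τ in Ioi (0:ℝ), Real.exp (-(s * τ)) * (1 + τ / γ) ^ (-(1 + α)) := by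
    rw [hf', integral_add (hint1.const_mul s) (hint2.const_mul (α / γ)),
      integral_const_mul, integral_const_mul]
  have htgt : (∫ τ in Ioi (0:ℝ), Real.exp (-s * τ) * ((α / γ) * (1 + τ / γ) ^ (-(1 + α))))
      = (α / γ) * ∫ τ in Ioi (0:ℝ), Real.exp (-(s * τ)) * (1 + τ / γ) ^ (-(1 + α)) := by
    rw [← integral_const_mul]
    apply setIntegral_congr_fun measurableSet_Ioi
    intro τ hτ
    simp only [neg_mul]
    ring
  rw [htgt]
  linarith [key, hsplit]

private lemma aux_sub {α γ s : ℝ} (hα0 : 0 < α) (hγ : 0 < γ) (hs : 0 < s) :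
    ((1 : ℝ) - (∫ τ in Ioi (0:ℝ), Real.exp (-s * τ) * ((α / γ) * (1 + τ / γ) ^ (-(1 + α))))) / s ^ α
      = ∫ u in Ioi (0:ℝ), Real.exp (-u) * (s + u / γ) ^ (-α) := by
  rw [aux_parts hα0 hγ hs]
  have hcomp : (∫ τ in Ioi (0:ℝ), Real.exp (-(s * τ)) * (1 + τ / γ) ^ (-α))
      = ∫ τ in Ioi (0:ℝ), (fun u => Real.exp (-u) * (1 + u / (s * γ)) ^ (-α)) (s * τ) := by
    apply setIntegral_congr_fun measurableSet_Ioi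
    intro τ hτ
    simp only
    rw [mul_div_mul_left τ γ hs.ne']
  rw [hcomp, integral_comp_mul_left_Ioi (fun u => Real.exp (-u) * (1 + u / (s * γ)) ^ (-α)) 0 hs, mul_zero]
  rw [smul_eq_mul, ← mul_assoc, mul_inv_cancel₀ hs.ne', one_mul]
  rw [div_eq_mul_inv, ← Real.rpow_neg hs.le, mul_comm, ← integral_const_mul]
  apply setIntegral_congr_fun measurableSet_Ioi
  intro u hu
  have hu0 : (0:ℝ) < u := hu
  have hbase : (0:ℝ) < 1 + u / (s * γ) := by
    have : 0 < u / (s * γ) := div_pos hu0 (by positivity)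
    linarith
  have key : s ^ (-α) * (1 + u / (s * γ)) ^ (-α) = (s + u / γ) ^ (-α) := by
    rw [← Real.mul_rpow hs.le hbase.le]
    congr 1
    field_simp
  show s ^ (-α) * (Real.exp (-u) * (1 + u / (s * γ)) ^ (-α)) = _
  rw [show s ^ (-α) * (Real.exp (-u) * (1 + u / (s * γ)) ^ (-α))
      = Real.exp (-u) * (s ^ (-α) * (1 + u / (s * γ)) ^ (-α)) by ring, key]

private lemma aux_bound_integrable {α γ : ℝ} (hα0 : 0 < α) (hα1 : α < 1) (hγ : 0 < γ) :
    IntegrableOn (fun u : ℝ => Real.exp (-u) * (u / γ) ^ (-α)) (Ioi 0) := by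
  have h1α : (0:ℝ) < 1 - α := by linarith
  have := (Real.GammaIntegral_convergent h1α).const_mul (γ ^ α)
  apply this.congr
  filter_upwards [ae_restrict_mem measurableSet_Ioi] with u hu
  have hu0 : (0:ℝ) < u := hu
  rw [Real.div_rpow hu0.le hγ.le, show (1:ℝ) - α - 1 = -α by ring,
    Real.rpow_neg hγ.le]
  field_simp

private lemma aux_value {α γ : ℝ} (hα0 : 0 < α) (hα1 : α < 1) (hγ : 0 < γ) :
    (∫ u in Ioi (0:ℝ), Real.exp (-u) * (u / γ) ^ (-α)) = Real.Gamma (1 - α) * γ ^ α := by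
  have h1α : (0:ℝ) < 1 - α := by linarith
  rw [Real.Gamma_eq_integral h1α, mul_comm, ← integral_const_mul]
  symm
  apply setIntegral_congr_fun measurableSet_Ioi
  intro u hu
  have hu0 : (0:ℝ) < u := hu
  show γ ^ α * (Real.exp (-u) * u ^ (1 - α - 1)) = Real.exp (-u) * (u / γ) ^ (-α)
  rw [Real.div_rpow hu0.le hγ.le, show (1:ℝ) - α - 1 = -α by ring,
    Real.rpow_neg hγ.le]
  field_simp

/-- For `w(τ) = (α/γ)(1+τ/γ)^{-(1+α)}`,
`(1 − (ℒw)(s)) / s^α → Γ(1−α)·γ^α` as `s → 0⁺`;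
that is, `(ℒw)(s) = 1 − Γ(1−α)(γs)^α + o(s^α)`. -/
theorem stmt4 (α γ : ℝ) (hα0 : 0 < α) (hα1 : α < 1) (hγ : 0 < γ) :
    Tendsto
      (fun s : ℝ =>
        (1 - ∫ τ in Ioi (0:ℝ), Real.exp (-s * τ) * ((α / γ) * (1 + τ / γ) ^ (-(1 + α)))) / s ^ α)
      (nhdsWithin 0 (Ioi 0)) (nhds (Real.Gamma (1 - α) * γ ^ α)) := by
  have hG : Tendsto (fun s : ℝ => ∫ u in Ioi (0:ℝ), Real.exp (-u) * (s + u / γ) ^ (-α))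
      (nhdsWithin 0 (Ioi 0)) (nhds (Real.Gamma (1 - α) * γ ^ α)) := by
    rw [← aux_value hα0 hα1 hγ]
    apply tendsto_integral_filter_of_dominated_convergence
      (fun u : ℝ => Real.exp (-u) * (u / γ) ^ (-α))
    · filter_upwards [self_mem_nhdsWithin] with s hs
      have hs0 : (0:ℝ) < s := hs
      apply ContinuousOn.aestronglyMeasurable _ measurableSet_Ioi
      intro u hu
      have hbase : (0:ℝ) < s + u / γ := by
        have : 0 < u / γ := div_pos hu hγ
        linarith
      exact ((Real.continuous_exp.comp continuous_neg).continuousAt.continuousWithinAt.mul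
        (((continuous_const.add (continuous_id.div_const γ)).continuousAt.rpow_const
          (Or.inl hbase.ne')).continuousWithinAt))
    · filter_upwards [self_mem_nhdsWithin] with s hs
      have hs0 : (0:ℝ) < s := hs
      filter_upwards [ae_restrict_mem measurableSet_Ioi] with u hu
      have hu0 : (0:ℝ) < u := hu
      have hb : (0:ℝ) < u / γ := div_pos hu0 hγ
      have hle : (s + u / γ) ^ (-α) ≤ (u / γ) ^ (-α) :=
        Real.rpow_le_rpow_of_nonpos hb (by linarith) (neg_nonpos.mpr hα0.le)
      have h3 : 0 ≤ (s + u / γ) ^ (-α) := Real.rpow_nonneg (by linarith) _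
      rw [norm_mul, Real.norm_eq_abs, Real.norm_eq_abs, abs_of_pos (Real.exp_pos _),
        abs_of_nonneg h3]
      have := Real.exp_pos (-u)
      nlinarith
    · exact aux_bound_integrable hα0 hα1 hγ
    · filter_upwards [ae_restrict_mem measurableSet_Ioi] with u hu
      have hu0 : (0:ℝ) < u := hu
      have hb : (0:ℝ) < u / γ := div_pos hu0 hγ
      apply Tendsto.const_mul
      have h1 : Tendsto (fun s : ℝ => s + u / γ) (nhdsWithin 0 (Ioi 0)) (nhds (u / γ)) := by
        have h2 : Tendsto (fun s : ℝ => s + u / γ) (nhds 0) (nhds (0 + u / γ)) :=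
          (continuous_id.add continuous_const).tendsto (0:ℝ)
        rw [zero_add] at h2
        exact h2.mono_left nhdsWithin_le_nhds
      exact ((Real.continuousAt_rpow_const (u / γ) (-α) (Or.inl hb.ne')).tendsto).comp h1
  apply hG.congr'
  filter_upwards [self_mem_nhdsWithin] with s hs
  exact (aux_sub hα0 hγ hs).symm
end

section
/- Let σ ∈ ℝ and let f : [0,∞) → ℝ be continuous, with t ↦ e^{−σt} f(t) Lebesgue integrable on (0,∞). Define G(ω) = ∫₀^∞ e^{−σt'} f(t') cos(ωt') dt' for ω ≥ 0 (this equals the real part of the Laplace transform of f at s = σ + iω), and suppose G is Lebesgue integrable on (0,∞). Then for every t > 0, f(t) = (2 e^{σt}/π) · ∫₀^∞ G(ω) cos(ωt) dω. -/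
open MeasureTheory Real Set FourierTransform

/-- The integral of an odd function over `ℝ` vanishes. -/
private lemma integral_odd_zero {w : ℝ → ℝ} (hw : ∀ x, w (-x) = - w x) :
    ∫ x, w x = 0 := by
  by_cases hint : Integrable w
  · have h1 : (∫ x in Iic (0:ℝ), w x) = - ∫ x in Ioi (0:ℝ), w x := by
      have h2 := integral_comp_neg_Ioi (0:ℝ) w
      rw [neg_zero] at h2
      rw [← h2]
      simp_rw [hw]
      exact integral_neg _
    have h3 : (∫ x, w x) = (∫ x in Iic (0:ℝ), w x) + ∫ x in Ioi (0:ℝ), w x := by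
      rw [← setIntegral_union (Iic_disjoint_Ioi le_rfl) measurableSet_Ioi
        hint.integrableOn hint.integrableOn, Iic_union_Ioi, Measure.restrict_univ]
    rw [h3, h1]; ring
  · exact integral_undef hint

/-- The even extension of a function integrable on `(0,∞)` is integrable on `ℝ`. -/
private lemma integrable_comp_abs' {F : ℝ → ℝ} (h : IntegrableOn F (Ioi 0)) :
    Integrable (fun x => F |x|) := by
  have hIoi : IntegrableOn (fun x => F |x|) (Ioi 0) := by
    apply h.congr_fun (fun x hx => ?_) measurableSet_Ioi
    rw [abs_of_pos hx]
  have hIic : IntegrableOn (fun x ↦ F |x|) (Iic 0) := by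
    rw [← Measure.map_neg_eq_self (volume : Measure ℝ)]
    have m : MeasurableEmbedding fun x : ℝ => -x := (Homeomorph.neg ℝ).measurableEmbedding
    rw [m.integrableOn_map_iff]
    simp_rw [Function.comp_def, abs_neg, neg_preimage, neg_Iic, neg_zero]
    exact Iff.mpr integrableOn_Ici_iff_integrableOn_Ioi hIoi
  have := hIic.union hIoi
  rwa [Iic_union_Ioi, integrableOn_univ] at this

/-- Fourier-type integral of an even real function reduces to a cosine integral. -/
private lemma integral_exp_mul_I (c : ℝ) {w : ℝ → ℝ} (hw : Integrable w)
    (hsym : ∀ x, w (-x) = w x) :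
    (∫ x : ℝ, Complex.exp ((c * x : ℝ) * Complex.I) * (w x : ℂ))
      = ((∫ x : ℝ, Real.cos (c * x) * w x : ℝ) : ℂ) := by
  have habs : ∀ x : ℝ, Complex.exp ((c * x : ℝ) * Complex.I) * (w x : ℂ)
      = ((Real.cos (c * x) * w x : ℝ) : ℂ) + ((Real.sin (c * x) * w x : ℝ) : ℂ) * Complex.I := by
    intro x
    rw [Complex.exp_mul_I, ← Complex.ofReal_cos, ← Complex.ofReal_sin]
    push_cast
    ring
  have hA : Integrable (fun x => Real.cos (c * x) * w x) :=
    hw.bdd_mul (Continuous.aestronglyMeasurable (by continuity))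
      (c := 1) (Filter.Eventually.of_forall fun x => by rw [Real.norm_eq_abs]; exact Real.abs_cos_le_one _)
  have hB : Integrable (fun x => Real.sin (c * x) * w x) :=
    hw.bdd_mul (Continuous.aestronglyMeasurable (by continuity))
      (c := 1) (Filter.Eventually.of_forall fun x => by rw [Real.norm_eq_abs]; exact Real.abs_sin_le_one _)
  have hA' : Integrable (fun x => ((Real.cos (c * x) * w x : ℝ) : ℂ)) := hA.ofReal
  have hB' : Integrable (fun x => ((Real.sin (c * x) * w x : ℝ) : ℂ)) := hB.ofReal
  have hio : ∀ u : ℝ → ℝ, (∫ x : ℝ, ((u x : ℝ) : ℂ)) = ((∫ x : ℝ, u x : ℝ) : ℂ) :=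
    fun u => integral_ofReal
  have hBodd : (∫ x : ℝ, Real.sin (c * x) * w x) = 0 := by
    apply integral_odd_zero
    intro x
    rw [hsym, mul_neg, Real.sin_neg]
    ring
  calc (∫ x : ℝ, Complex.exp ((c * x : ℝ) * Complex.I) * (w x : ℂ))
      = ∫ x : ℝ, (((Real.cos (c * x) * w x : ℝ) : ℂ)
          + ((Real.sin (c * x) * w x : ℝ) : ℂ) * Complex.I) := by
        exact integral_congr_ae (Filter.Eventually.of_forall habs)
    _ = ((∫ x : ℝ, Real.cos (c * x) * w x : ℝ) : ℂ)
          + ((∫ x : ℝ, Real.sin (c * x) * w x : ℝ) : ℂ) * Complex.I := by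
        rw [integral_add hA' (hB'.mul_const Complex.I), integral_mul_const, hio, hio]
    _ = ((∫ x : ℝ, Real.cos (c * x) * w x : ℝ) : ℂ) := by
        rw [hBodd]; simp

/-- Laplace inversion via the cosine representation: if `f` is continuous on `[0,∞)`,
`t ↦ e^{−σt} f(t)` is integrable on `(0,∞)`, and
`G(ω) = ∫₀^∞ e^{−σt'} f(t') cos(ωt') dt' = Re(ℒf)(σ+iω)` is integrable on `(0,∞)`,
then for every `t > 0`, `f(t) = (2 e^{σt}/π) ∫₀^∞ G(ω) cos(ωt) dω`. -/
theorem stmt11 (σ : ℝ) (f : ℝ → ℝ) (hf : ContinuousOn f (Ici 0))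
    (hint : IntegrableOn (fun t => Real.exp (-σ * t) * f t) (Ioi 0))
    (G : ℝ → ℝ)
    (hG : ∀ ω, G ω = ∫ t' in Ioi (0:ℝ), Real.exp (-σ * t') * f t' * Real.cos (ω * t'))
    (hGint : IntegrableOn G (Ioi 0))
    (t : ℝ) (ht : 0 < t) :
    f t = (2 * Real.exp (σ * t) / π) * ∫ ω in Ioi (0:ℝ), G ω * Real.cos (ω * t) := by
  have hπ : (0:ℝ) < π := Real.pi_pos
  set h : ℝ → ℝ := fun x => Real.exp (-σ * |x|) * f |x| with hh
  have hcont : Continuous h := by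
    have hc : ContinuousOn (fun y : ℝ => Real.exp (-σ * y) * f y) (Ici 0) :=
      ((Real.continuous_exp.comp (continuous_const.mul continuous_id)).continuousOn).mul hf
    exact hc.comp_continuous continuous_abs (fun x => abs_nonneg x)
  have h_int : Integrable h := integrable_comp_abs' hint
  have hsymh : ∀ x, h (-x) = h x := fun x => by simp only [hh, abs_neg]
  have hGeven : ∀ ω, G (-ω) = G ω := by
    intro ω
    rw [hG, hG]
    exact setIntegral_congr_fun measurableSet_Ioi
      (fun x _ => by rw [show (-ω * x : ℝ) = -(ω * x) by ring, Real.cos_neg])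
  -- The Fourier transform of the even extension.
  have hF : ∀ ξ : ℝ, 𝓕 (fun x => (h x : ℂ)) ξ = ((2 * G (2 * π * ξ) : ℝ) : ℂ) := by
    intro ξ
    rw [Real.fourier_real_eq_integral_exp_smul]
    have e1 : ∀ v : ℝ, Complex.exp ((-2 * π * v * ξ : ℝ) * Complex.I) • ((h v : ℝ) : ℂ)
        = Complex.exp (((-(2 * π * ξ)) * v : ℝ) * Complex.I) * (h v : ℂ) := by
      intro v
      rw [smul_eq_mul, show (-2 * π * v * ξ : ℝ) = -(2 * π * ξ) * v by ring]
    rw [integral_congr_ae (Filter.Eventually.of_forall e1),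
      integral_exp_mul_I (-(2 * π * ξ)) h_int hsymh]
    norm_cast
    have e2 : (fun x : ℝ => Real.cos ((-(2 * π * ξ)) * x) * h x)
        = fun x : ℝ => Real.exp (-σ * |x|) * f |x| * Real.cos (2 * π * ξ * |x|) := by
      funext x
      have e3 : Real.cos (2 * π * ξ * |x|) = Real.cos (2 * π * ξ * x) := by
        rcases abs_choice x with hx | hx
        · rw [hx]
        · rw [hx, mul_neg, Real.cos_neg]
      simp only [hh]
      rw [e3, show (-(2 * π * ξ)) * x = -(2 * π * ξ * x) by ring, Real.cos_neg]
      ring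
    have e5 : (∫ x : ℝ, Real.exp (-σ * |x|) * f |x| * Real.cos (2 * π * ξ * |x|))
        = 2 * ∫ y in Ioi (0:ℝ), Real.exp (-σ * y) * f y * Real.cos (2 * π * ξ * y) :=
      integral_comp_abs (f := fun y => Real.exp (-σ * y) * f y * Real.cos (2 * π * ξ * y))
    rw [e2, e5, ← hG]
  -- Integrability of the Fourier transform.
  have hGsc : Integrable (fun ξ : ℝ => G (2 * π * ξ)) := by
    have h1 : IntegrableOn (fun ξ : ℝ => G (2 * π * ξ)) (Ioi 0) := by
      rw [show (fun ξ : ℝ => G (2 * π * ξ)) = fun ξ : ℝ => G ((2 * π) * ξ) by ring_nf,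
        integrableOn_Ioi_comp_mul_left_iff G 0 (by positivity : (0:ℝ) < 2 * π)]
      simpa using hGint
    have h2 : (fun ξ : ℝ => G (2 * π * ξ)) = fun ξ : ℝ => (fun y => G (2 * π * y)) |ξ| := by
      funext ξ
      rcases abs_choice ξ with hx | hx
      · rw [hx]
      · simp only [hx, mul_neg, hGeven]
    rw [h2]
    exact integrable_comp_abs' h1
  have hFint : Integrable (𝓕 (fun x => (h x : ℂ))) := by
    rw [funext hF]
    exact (hGsc.const_mul 2).ofReal
  -- Fourier inversion.
  have h_intC : Integrable (fun x => ((h x : ℝ) : ℂ)) := h_int.ofReal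
  have hinv := h_intC.fourierInv_fourier_eq hFint
    ((Complex.continuous_ofReal.comp hcont).continuousAt (x := t))
  -- Compute the inverse Fourier integral.
  have hw2 : Integrable (fun ξ : ℝ => 2 * G (2 * π * ξ)) := hGsc.const_mul 2
  have hw2sym : ∀ ξ : ℝ, 2 * G (2 * π * (-ξ)) = 2 * G (2 * π * ξ) := by
    intro ξ; rw [mul_neg, hGeven]
  have hLHS : 𝓕⁻ (𝓕 (fun x => (h x : ℂ))) t
      = ((∫ ξ : ℝ, Real.cos ((2 * π * t) * ξ) * (2 * G (2 * π * ξ)) : ℝ) : ℂ) := by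
    rw [Real.fourierInv_eq_fourier_neg, funext hF,
      Real.fourier_real_eq_integral_exp_smul]
    have e1 : ∀ v : ℝ, Complex.exp ((-2 * π * v * (-t) : ℝ) * Complex.I)
          • ((2 * G (2 * π * v) : ℝ) : ℂ)
        = Complex.exp (((2 * π * t) * v : ℝ) * Complex.I) * ((2 * G (2 * π * v) : ℝ) : ℂ) := by
      intro v
      rw [smul_eq_mul, show (-2 * π * v * (-t) : ℝ) = (2 * π * t) * v by ring]
    rw [integral_congr_ae (Filter.Eventually.of_forall e1),
      integral_exp_mul_I (2 * π * t) hw2 hw2sym]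
  rw [hLHS] at hinv
  have hreal : (∫ ξ : ℝ, Real.cos ((2 * π * t) * ξ) * (2 * G (2 * π * ξ)))
      = Real.exp (-σ * t) * f t := by
    have := hinv
    rw [Complex.ofReal_inj] at this
    rw [this]
    simp only [hh, abs_of_pos ht]
  -- Reduce the full-line cosine integral to the half-line integral.
  have hsubst : (∫ ξ : ℝ, Real.cos ((2 * π * t) * ξ) * (2 * G (2 * π * ξ)))
      = (2 / π) * ∫ ω in Ioi (0:ℝ), G ω * Real.cos (ω * t) := by
    have e2 : (fun ξ : ℝ => Real.cos ((2 * π * t) * ξ) * (2 * G (2 * π * ξ)))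
        = fun ξ : ℝ => 2 * (G (2 * π * |ξ|) * Real.cos ((2 * π * |ξ|) * t)) := by
      funext ξ
      have e3 : Real.cos (2 * π * |ξ| * t) = Real.cos ((2 * π * t) * ξ) := by
        rcases abs_choice ξ with hx | hx
        · rw [hx]; ring_nf
        · rw [hx]
          rw [show 2 * π * (-ξ) * t = -(2 * π * t * ξ) by ring, Real.cos_neg]
      have e4 : G (2 * π * |ξ|) = G (2 * π * ξ) := by
        rcases abs_choice ξ with hx | hx
        · rw [hx]
        · rw [hx, mul_neg, hGeven]
      rw [e3, e4]
      ring
    have e5 : (∫ ξ : ℝ, 2 * (G (2 * π * |ξ|) * Real.cos ((2 * π * |ξ|) * t)))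
        = 2 * ∫ y in Ioi (0:ℝ), 2 * (G (2 * π * y) * Real.cos ((2 * π * y) * t)) :=
      integral_comp_abs (f := fun y => 2 * (G (2 * π * y) * Real.cos ((2 * π * y) * t)))
    have e6 : (∫ y in Ioi (0:ℝ), 2 * (G (2 * π * y) * Real.cos ((2 * π * y) * t)))
        = (2 * π)⁻¹ • ∫ ω in Ioi ((2 * π) * 0), 2 * (G ω * Real.cos (ω * t)) :=
      integral_comp_mul_left_Ioi (fun ω => 2 * (G ω * Real.cos (ω * t))) 0
        (by positivity : (0:ℝ) < 2 * π)
    rw [e2, e5, e6, mul_zero, smul_eq_mul, integral_const_mul]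
    field_simp
    ring_nf
    simp_rw [mul_comm t]
  have key : Real.exp (-σ * t) * f t
      = (2 / π) * ∫ ω in Ioi (0:ℝ), G ω * Real.cos (ω * t) := by
    rw [← hreal, hsubst]
  have hexp : f t = Real.exp (σ * t) * (Real.exp (-σ * t) * f t) := by
    rw [← mul_assoc, ← Real.exp_add]
    norm_num
  rw [hexp, key]
  ring
end

section
/- Let S² denote the unit sphere in ℝ³ with its surface measure dσ, and let p : [−1,1] → ℝ be continuous with p(x) > 0 for all x ∈ [−1,1] and ∫_{S²} p(θ·θ') dσ(θ') = 1 for every unit vector θ. If f : S² → ℝ is continuous and satisfies f(θ) = ∫_{S²} p(θ·θ') f(θ') dσ(θ') for every θ ∈ S², then f is constant. (Equivalently: every continuous eigenfunction of the scattering operator K₀ with eigenvalue 1 is constant.) -/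
open MeasureTheory Real Set Metric
open scoped RealInnerProductSpace

private lemma sphere_inner_mem_Icc (θ θ' : sphere (0 : EuclideanSpace ℝ (Fin 3)) 1) :
    ⟪(θ : EuclideanSpace ℝ (Fin 3)), (θ' : EuclideanSpace ℝ (Fin 3))⟫ ∈ Icc (-1:ℝ) 1 := by
  have h1 : ‖(θ : EuclideanSpace ℝ (Fin 3))‖ = 1 := by simp [mem_sphere_zero_iff_norm.mp θ.2]
  have h2 : ‖(θ' : EuclideanSpace ℝ (Fin 3))‖ = 1 := by simp [mem_sphere_zero_iff_norm.mp θ'.2]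
  have h := abs_real_inner_le_norm (θ : EuclideanSpace ℝ (Fin 3)) θ'
  rw [h1, h2, one_mul] at h
  exact ⟨(abs_le.mp h).1, (abs_le.mp h).2⟩

/-- If the scattering phase function `p` is continuous and strictly positive on
`[−1,1]` with `∫_{S²} p(θ·θ') dσ(θ') = 1` for every `θ`, then every continuous
eigenfunction of the scattering operator `K₀` with eigenvalue `1`, i.e. every
continuous `f` with `f(θ) = ∫_{S²} p(θ·θ') f(θ') dσ(θ')` for all `θ`, is constant. -/
theorem stmt14 (p : ℝ → ℝ) (hp_cont : ContinuousOn p (Icc (-1) 1))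
    (hp_pos : ∀ x ∈ Icc (-1 : ℝ) 1, 0 < p x)
    (hp_norm : ∀ θ : sphere (0 : EuclideanSpace ℝ (Fin 3)) 1,
      (∫ θ' : sphere (0 : EuclideanSpace ℝ (Fin 3)) 1,
          p ⟪(θ : EuclideanSpace ℝ (Fin 3)), (θ' : EuclideanSpace ℝ (Fin 3))⟫
          ∂(volume : Measure (EuclideanSpace ℝ (Fin 3))).toSphere) = 1)
    (f : sphere (0 : EuclideanSpace ℝ (Fin 3)) 1 → ℝ) (hf : Continuous f)
    (hfix : ∀ θ : sphere (0 : EuclideanSpace ℝ (Fin 3)) 1,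
      f θ = ∫ θ' : sphere (0 : EuclideanSpace ℝ (Fin 3)) 1,
        p ⟪(θ : EuclideanSpace ℝ (Fin 3)), (θ' : EuclideanSpace ℝ (Fin 3))⟫ * f θ'
        ∂(volume : Measure (EuclideanSpace ℝ (Fin 3))).toSphere) :
    ∀ θ₁ θ₂ : sphere (0 : EuclideanSpace ℝ (Fin 3)) 1, f θ₁ = f θ₂ := by
  set E := EuclideanSpace ℝ (Fin 3)
  set μ := (volume : Measure E).toSphere with hμ
  -- the sphere is a nonempty compact space
  have hne : Nonempty (sphere (0 : E) 1) :=
    (NormedSpace.sphere_nonempty.mpr zero_le_one).to_subtype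
  -- continuity of the kernel
  have hker : ∀ θ : sphere (0 : E) 1,
      Continuous (fun θ' : sphere (0 : E) 1 => p ⟪(θ : E), (θ' : E)⟫) := by
    intro θ
    exact hp_cont.comp_continuous (Continuous.inner continuous_const continuous_subtype_val)
      (fun θ' => sphere_inner_mem_Icc θ θ')
  -- integrability of continuous functions
  have hint : ∀ g : sphere (0 : E) 1 → ℝ, Continuous g → Integrable g μ := fun g hg =>
    hg.integrable_of_hasCompactSupport (HasCompactSupport.of_compactSpace g)
  -- positive lower bound for p
  obtain ⟨x₀, hx₀, hminp⟩ := isCompact_Icc.exists_isMinOn (by norm_num : (Icc (-1:ℝ) 1).Nonempty)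
    hp_cont
  set ε := p x₀ with hε
  have hεpos : 0 < ε := hp_pos x₀ hx₀
  have hεle : ∀ x ∈ Icc (-1:ℝ) 1, ε ≤ p x := fun x hx => hminp hx
  -- max and min points
  obtain ⟨θM, -, hM⟩ := isCompact_univ.exists_isMaxOn univ_nonempty hf.continuousOn
  obtain ⟨θm, -, hm⟩ := isCompact_univ.exists_isMinOn univ_nonempty hf.continuousOn
  have hMle : ∀ θ, f θ ≤ f θM := fun θ => hM (mem_univ θ)
  have hmle : ∀ θ, f θm ≤ f θ := fun θ => hm (mem_univ θ)
  -- key vanishing integrals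
  have key : ∀ θ : sphere (0 : E) 1,
      (∫ θ', p ⟪(θ : E), (θ' : E)⟫ * (f θ - f θ') ∂μ) = 0 := by
    intro θ
    have h1 : (∫ θ', p ⟪(θ : E), (θ' : E)⟫ * (f θ - f θ') ∂μ)
        = (∫ θ', p ⟪(θ : E), (θ' : E)⟫ * f θ ∂μ)
          - ∫ θ', p ⟪(θ : E), (θ' : E)⟫ * f θ' ∂μ := by
      rw [← integral_sub ((hint (fun θ' => p ⟪(θ : E), (θ' : E)⟫ * f θ) ((hker θ).mul continuous_const)))
        (hint (fun θ' => p ⟪(θ : E), (θ' : E)⟫ * f θ') ((hker θ).mul hf))]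
      congr 1; ext θ'; ring
    rw [h1, ← hfix θ, integral_mul_const, hp_norm θ, one_mul, sub_self]
  -- combine at θM and θm
  have hcomb : (∫ θ', (p ⟪(θM : E), (θ' : E)⟫ * (f θM - f θ')
      + p ⟪(θm : E), (θ' : E)⟫ * (f θ' - f θm)) ∂μ) = 0 := by
    have h2 : ∀ θ' : sphere (0 : E) 1,
        p ⟪(θm : E), (θ' : E)⟫ * (f θ' - f θm) = -(p ⟪(θm : E), (θ' : E)⟫ * (f θm - f θ')) := by
      intro θ'; ring
    rw [integral_add (hint (fun θ' => p ⟪(θM : E), (θ' : E)⟫ * (f θM - f θ')) (((hker θM).mul (continuous_const.sub hf))))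
      (hint (fun θ' => p ⟪(θm : E), (θ' : E)⟫ * (f θ' - f θm)) (((hker θm).mul (hf.sub continuous_const)))), key θM]
    simp only [h2]
    rw [integral_neg, key θm]
    ring
  -- lower bound for the integrand
  have hlb : (ε * (f θM - f θm)) * (μ univ).toReal
      ≤ ∫ θ', (p ⟪(θM : E), (θ' : E)⟫ * (f θM - f θ')
        + p ⟪(θm : E), (θ' : E)⟫ * (f θ' - f θm)) ∂μ := by
    have := integral_mono (g := fun θ' : sphere (0 : E) 1 =>
        p ⟪(θM : E), (θ' : E)⟫ * (f θM - f θ') + p ⟪(θm : E), (θ' : E)⟫ * (f θ' - f θm))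
      (integrable_const (ε * (f θM - f θm)))
      (hint _ (((hker θM).mul (continuous_const.sub hf)).add
        ((hker θm).mul (hf.sub continuous_const))))
      (by
        intro θ'
        have hA : ε * (f θM - f θ') ≤ p ⟪(θM : E), (θ' : E)⟫ * (f θM - f θ') :=
          mul_le_mul_of_nonneg_right (hεle _ (sphere_inner_mem_Icc θM θ'))
            (sub_nonneg.mpr (hMle θ'))
        have hB : ε * (f θ' - f θm) ≤ p ⟪(θm : E), (θ' : E)⟫ * (f θ' - f θm) :=
          mul_le_mul_of_nonneg_right (hεle _ (sphere_inner_mem_Icc θm θ'))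
            (sub_nonneg.mpr (hmle θ'))
        show ε * (f θM - f θm) ≤ _
        calc ε * (f θM - f θm) = ε * (f θM - f θ') + ε * (f θ' - f θm) := by ring
        _ ≤ _ := add_le_add hA hB)
    rwa [integral_const, smul_eq_mul, mul_comm] at this
  -- positivity of the total measure
  have hμpos : 0 < (μ univ).toReal := by
    refine ENNReal.toReal_pos ?_ (measure_ne_top μ univ)
    rw [hμ, Measure.toSphere_apply_univ]
    refine (ENNReal.mul_pos ?_ (measure_ball_pos _ _ one_pos).ne').ne'
    simp [E, finrank_euclideanSpace]
  -- conclude f θM = f θm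
  rw [hcomb] at hlb
  have hMm : f θM ≤ f θm := by
    by_contra h
    push_neg at h
    have := mul_pos (mul_pos hεpos (sub_pos.mpr h)) hμpos
    linarith
  intro θ₁ θ₂
  have e1 : f θ₁ = f θM := le_antisymm (hMle θ₁) (le_trans hMm (hmle θ₁) |>.trans (le_refl _))
  have e2 : f θ₂ = f θM := le_antisymm (hMle θ₂) (le_trans hMm (hmle θ₂))
  rw [e1, e2]
end

section
/- Fix N ∈ ℕ, reals 0 < μ₁ < ⋯ < μ_N < 1, positive weights w₁,…,w_N, a real σ_s > 0, and a complex number σ_t. For a complex ν with σ_t ν ≠ ±μ_i for all i, define φ(ν, ±μ_i) = (σ_s ν / 2) / (σ_t ν ∓ μ_i). Suppose ν and ν' are two nonzero complex numbers with ν ≠ ν', each with σ_t ν ≠ ±μ_i and σ_t ν' ≠ ±μ_i for all i, and each satisfying the characteristic equation Σ_{j=1}^N w_j [φ(·, μ_j) + φ(·, −μ_j)] = 1. Then the orthogonality relation holds: Σ_{i=1}^N w_i μ_i [φ(ν, μ_i) φ(ν', μ_i) − φ(ν, −μ_i) φ(ν', −μ_i)] = 0. -/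
open Complex

/-- The ADO eigenfunction: `φ(ν, m) = (σ_s ν / 2) / (σ_t ν − m)` for a signed
Gauss–Legendre node `m ∈ {±μ₁, …, ±μ_N}`. -/
noncomputable def adoPhi (σs : ℝ) (σt ν : ℂ) (m : ℝ) : ℂ :=
  (σs * ν / 2) / (σt * ν - m)

lemma ado_aux (a b m p q r : ℂ) (hp : a = r * p) (hq : b = r * q)
    (h1 : a - m ≠ 0) (h2 : a + m ≠ 0) (h3 : b - m ≠ 0) (h4 : b + m ≠ 0)
    (hab : b - a ≠ 0) :
    m * (p / (a - m) * (q / (b - m)) - p / (a + m) * (q / (b + m)))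
      = (p * q * r / (b - a)) *
        ((p / (a - m) + p / (a + m)) - (q / (b - m) + q / (b + m))) := by
  subst hp hq
  rw [div_add_div _ _ h1 h2, div_add_div _ _ h3 h4, div_mul_div_comm, div_mul_div_comm,
    div_sub_div _ _ (mul_ne_zero h1 h3) (mul_ne_zero h2 h4), div_sub_div _ _ (mul_ne_zero h1 h2) (mul_ne_zero h3 h4),
    mul_div_assoc', div_mul_div_comm, div_eq_div_iff (mul_ne_zero (mul_ne_zero h1 h3) (mul_ne_zero h2 h4))
    (mul_ne_zero hab (mul_ne_zero (mul_ne_zero h1 h2) (mul_ne_zero h3 h4)))]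
  ring

/-- ADO orthogonality: if the two distinct nonzero separation constants `ν ≠ ν'`
both satisfy the characteristic equation `Σ_j w_j [φ(·, μ_j) + φ(·, −μ_j)] = 1`,
then `Σ_i w_i μ_i [φ(ν, μ_i) φ(ν', μ_i) − φ(ν, −μ_i) φ(ν', −μ_i)] = 0`. -/
theorem stmt16 (N : ℕ) (μ w : Fin N → ℝ)
    (hμ0 : ∀ i, 0 < μ i) (hμ1 : ∀ i, μ i < 1) (hμmono : StrictMono μ)
    (hw : ∀ i, 0 < w i)
    (σs : ℝ) (hσs : 0 < σs) (σt : ℂ)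
    (ν ν' : ℂ) (hν : ν ≠ 0) (hν' : ν' ≠ 0) (hne : ν ≠ ν')
    (hres : ∀ i, σt * ν ≠ (μ i : ℂ) ∧ σt * ν ≠ -(μ i : ℂ))
    (hres' : ∀ i, σt * ν' ≠ (μ i : ℂ) ∧ σt * ν' ≠ -(μ i : ℂ))
    (hchar : ∑ j, (w j : ℂ) * (adoPhi σs σt ν (μ j) + adoPhi σs σt ν (-(μ j))) = 1)
    (hchar' : ∑ j, (w j : ℂ) * (adoPhi σs σt ν' (μ j) + adoPhi σs σt ν' (-(μ j))) = 1) :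
    ∑ i, (w i : ℂ) * (μ i : ℂ) *
        (adoPhi σs σt ν (μ i) * adoPhi σs σt ν' (μ i) -
          adoPhi σs σt ν (-(μ i)) * adoPhi σs σt ν' (-(μ i))) = 0 := by
  have hσs' : (σs : ℂ) ≠ 0 := by exact_mod_cast hσs.ne'
  have hσt : σt ≠ 0 := by
    intro h
    subst h
    rw [Finset.sum_eq_zero] at hchar
    · exact one_ne_zero hchar.symm
    · intro j _
      have hμj : (μ j : ℂ) ≠ 0 := by exact_mod_cast (hμ0 j).ne'
      simp only [adoPhi, zero_mul, zero_sub]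
      field_simp
      simp [hμj]
  have hab : σt * ν' - σt * ν ≠ 0 := by
    intro h
    have : σt * (ν' - ν) = 0 := by linear_combination h
    rcases mul_eq_zero.mp this with h1 | h1
    · exact hσt h1
    · exact hne (sub_eq_zero.mp h1).symm
  set c : ℂ := (σs * ν / 2) * (σs * ν' / 2) * (2 * σt / σs) / (σt * ν' - σt * ν) with hc
  have key : ∀ i, (w i : ℂ) * (μ i : ℂ) *
        (adoPhi σs σt ν (μ i) * adoPhi σs σt ν' (μ i) -
          adoPhi σs σt ν (-(μ i)) * adoPhi σs σt ν' (-(μ i)))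
      = c * ((w i : ℂ) * (adoPhi σs σt ν (μ i) + adoPhi σs σt ν (-(μ i)))
             - (w i : ℂ) * (adoPhi σs σt ν' (μ i) + adoPhi σs σt ν' (-(μ i)))) := by
    intro i
    have h1 : σt * ν - (μ i : ℂ) ≠ 0 := sub_ne_zero.mpr (hres i).1
    have h2 : σt * ν + (μ i : ℂ) ≠ 0 := by
      intro h; exact (hres i).2 (by linear_combination h)
    have h3 : σt * ν' - (μ i : ℂ) ≠ 0 := sub_ne_zero.mpr (hres' i).1
    have h4 : σt * ν' + (μ i : ℂ) ≠ 0 := by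
      intro h; exact (hres' i).2 (by linear_combination h)
    have hp : σt * ν = (2 * σt / σs) * (σs * ν / 2) := by field_simp
    have hq : σt * ν' = (2 * σt / σs) * (σs * ν' / 2) := by field_simp
    have H := ado_aux (σt * ν) (σt * ν') (μ i) (σs * ν / 2) (σs * ν' / 2)
      (2 * σt / σs) hp hq h1 h2 h3 h4 hab
    simp only [adoPhi, Complex.ofReal_neg, sub_neg_eq_add, hc]
    calc (w i : ℂ) * (μ i : ℂ) *
          ((σs : ℂ) * ν / 2 / (σt * ν - (μ i : ℂ)) * ((σs : ℂ) * ν' / 2 / (σt * ν' - (μ i : ℂ))) -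
            (σs : ℂ) * ν / 2 / (σt * ν + (μ i : ℂ)) * ((σs : ℂ) * ν' / 2 / (σt * ν' + (μ i : ℂ))))
        = (w i : ℂ) * ((μ i : ℂ) *
            ((σs : ℂ) * ν / 2 / (σt * ν - (μ i : ℂ)) * ((σs : ℂ) * ν' / 2 / (σt * ν' - (μ i : ℂ))) -
              (σs : ℂ) * ν / 2 / (σt * ν + (μ i : ℂ)) * ((σs : ℂ) * ν' / 2 / (σt * ν' + (μ i : ℂ))))) := by
          ring
      _ = _ := by rw [H]; ring
  rw [Finset.sum_congr rfl (fun i _ => key i), ← Finset.mul_sum,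
    Finset.sum_sub_distrib, hchar, hchar', sub_self, mul_zero]
end
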